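/- If a two-party protocol without shared oracle or shared randomness has agreement probability p (the probability both parties output the same value), then there exists an eavesdropper E, seeing only the transcript, whose output equals Alice's output with probability exactly p: specifically, E samples a view of Alice consistent with the transcript and outputs Alice's output on that view. Consequently, for 0 ≤ α ≤ 1 and 0 ≤ γ < 1 − α, there is no (q, α, γ)-key-agreement protocol relative to the trivial function family. -/

import Mathlib

open scoped BigOperators Classical

noncomputable section

variable {Ω : Type*} [Fintype Ω]

/-- Probability of an event under a mass function `μ`. -/
def prEv (μ : Ω → ℝ) (E : Ω → Prop) : ℝ := ∑ ω, if E ω then μ ω else 0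

/-- Distribution (pmf) of a random variable. -/
def rvDist (μ : Ω → ℝ) {α : Type*} (X : Ω → α) : α → ℝ :=
  fun a => prEv μ (fun ω => X ω = a)

/-- Conditional distribution of `X` given the event `B = b`. -/
def condDist (μ : Ω → ℝ) {α β : Type*} (X : Ω → α) (B : Ω → β) (b : β) : α → ℝ :=
  fun a => prEv μ (fun ω => X ω = a ∧ B ω = b) / prEv μ (fun ω => B ω = b)

/-- Product of two distributions. -/
def prodDist {α β : Type*} (P : α → ℝ) (Q : β → ℝ) : α × β → ℝ := fun p => P p.1 * Q p.2

/-- Statistical (total variation) distance between two distributions on a finite set. -/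
def SD {α : Type*} [Fintype α] (P Q : α → ℝ) : ℝ := (1/2) * ∑ a, |P a - Q a|

/-- Shannon entropy (base 2) of a distribution, with the convention `0 · log(1/0) = 0`. -/
def H2 {α : Type*} [Fintype α] (P : α → ℝ) : ℝ :=
  ∑ a, if P a = 0 then 0 else P a * Real.logb 2 (1 / P a)

/-- Shannon entropy of a random variable. -/
def entRV (μ : Ω → ℝ) {α : Type*} [Fintype α] (X : Ω → α) : ℝ := H2 (rvDist μ X)

/-- Conditional mutual information `I(A;B|C)` (in bits). -/
def condMI (μ : Ω → ℝ) {α β γ : Type*} [Fintype α] [Fintype β] [Fintype γ]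
    (A : Ω → α) (B : Ω → β) (C : Ω → γ) : ℝ :=
  entRV μ (fun ω => (A ω, C ω)) + entRV μ (fun ω => (B ω, C ω))
    - entRV μ (fun ω => (A ω, B ω, C ω)) - entRV μ C

/-- The conditional probability measure given `Z = z`. -/
def condMeas (μ : Ω → ℝ) {ζ : Type*} (Z : Ω → ζ) (z : ζ) : Ω → ℝ :=
  fun ω => if Z ω = z then μ ω / prEv μ (fun ω' => Z ω' = z) else 0

/-- `μ` is a probability mass function. -/
def IsPMF (μ : Ω → ℝ) : Prop := (∀ ω, 0 ≤ μ ω) ∧ ∑ ω, μ ω = 1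

end

section Aux

variable {Ω : Type*} [Fintype Ω]

lemma prEv_congr (μ : Ω → ℝ) {E F : Ω → Prop} (h : ∀ ω, E ω ↔ F ω) :
    prEv μ E = prEv μ F := by
  unfold prEv
  exact Finset.sum_congr rfl fun ω _ => by simp [h ω]

lemma prEv_nonneg (μ : Ω → ℝ) (h0 : ∀ ω, 0 ≤ μ ω) (E : Ω → Prop) : 0 ≤ prEv μ E := by
  unfold prEv
  refine Finset.sum_nonneg fun ω _ => ?_
  split <;> simp [h0 ω]

lemma prEv_mono (μ : Ω → ℝ) (h0 : ∀ ω, 0 ≤ μ ω) {E F : Ω → Prop}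
    (h : ∀ ω, E ω → F ω) : prEv μ E ≤ prEv μ F := by
  unfold prEv
  refine Finset.sum_le_sum fun ω _ => ?_
  by_cases hE : E ω
  · simp [hE, h ω hE]
  · simp only [hE, if_false]
    split <;> simp [h0 ω]

lemma sum_pick {K : Type*} [Fintype K] (μ : Ω → ℝ) (X : Ω → K) (F : K → Ω → Prop) :
    ∑ k, prEv μ (fun ω => X ω = k ∧ F k ω) = prEv μ (fun ω => F (X ω) ω) := by
  unfold prEv
  rw [Finset.sum_comm]
  refine Finset.sum_congr rfl fun ω _ => ?_
  rw [Finset.sum_eq_single (X ω)]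
  · simp
  · intro k _ hk
    simp [Ne.symm hk]
  · simp

lemma sum_fiber {K : Type*} [Fintype K] (μ : Ω → ℝ) (X : Ω → K) (p : K → Prop)
    (E : Ω → Prop) :
    ∑ k, (if p k then prEv μ (fun ω => X ω = k ∧ E ω) else 0)
      = prEv μ (fun ω => p (X ω) ∧ E ω) := by
  rw [← sum_pick μ X (fun k ω => p k ∧ E ω)]
  refine Finset.sum_congr rfl fun k _ => ?_
  by_cases hp : p k
  · simp only [hp, if_true]
    exact prEv_congr μ fun ω => by tauto
  · simp only [hp, if_false]
    unfold prEv
    exact (Finset.sum_eq_zero fun ω _ => by simp [hp]).symm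

end Aux

/-- In a two-party protocol without a shared oracle or shared randomness (so the parties'
views are conditionally independent given the transcript, which is determined by Alice's
view), there is an eavesdropper `e` (a distribution over keys for each transcript) whose
output matches Alice's output with probability exactly `P[out^A = out^B]`. Consequently,
for `0 ≤ α ≤ 1` and `0 ≤ γ < 1 − α`, the protocol cannot be both `(1-α)`-accurate and
`γ`-secret: no `(q, α, γ)`-key agreement exists relative to the trivial family. -/
theorem no_it_key_agreement {Ω τ VA VB K : Type*}
    [Fintype Ω] [Fintype τ] [Fintype VA] [Fintype VB] [Fintype K]
    (μ : Ω → ℝ) (hμ : IsPMF μ)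
    (viewA : Ω → VA) (viewB : Ω → VB) (Tr : Ω → τ)
    (fA : VA → K) (fB : VB → K)
    -- the transcript is part of Alice's view
    (hTrA : ∃ gA : VA → τ, Tr = fun ω => gA (viewA ω))
    -- the parties' views are conditionally independent given the transcript
    (hcond : ∀ (t : τ) (a : VA) (b : VB),
        prEv μ (fun ω => viewA ω = a ∧ viewB ω = b ∧ Tr ω = t) *
            prEv μ (fun ω => Tr ω = t)
          = prEv μ (fun ω => viewA ω = a ∧ Tr ω = t) *
            prEv μ (fun ω => viewB ω = b ∧ Tr ω = t)) :
    (∃ e : τ → K → ℝ,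
        (∀ t, (∀ k, 0 ≤ e t k) ∧ ∑ k, e t k = 1) ∧
        (∑ ω, μ ω * e (Tr ω) (fA (viewA ω)))
          = prEv μ (fun ω => fA (viewA ω) = fB (viewB ω))) ∧
    (∀ α γ : ℝ, 0 ≤ α → α ≤ 1 → 0 ≤ γ → γ < 1 - α →
      ¬ (prEv μ (fun ω => fA (viewA ω) = fB (viewB ω)) ≥ 1 - α ∧
         ∀ e : τ → K → ℝ, (∀ t, (∀ k, 0 ≤ e t k) ∧ ∑ k, e t k = 1) →
           (∑ ω, μ ω * e (Tr ω) (fA (viewA ω))) ≤ γ)) := by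
  classical
  obtain ⟨h0, h1⟩ := hμ
  -- Ω is nonempty, hence K is nonempty
  have hΩ : Nonempty Ω := by
    rcases isEmpty_or_nonempty Ω with hE | hNE
    · exfalso
      rw [Finset.univ_eq_empty, Finset.sum_empty] at h1
      norm_num at h1
    · exact hNE
  obtain ⟨ω₀⟩ := hΩ
  set k₀ : K := fA (viewA ω₀) with hk₀
  set P : τ → ℝ := fun t => prEv μ (fun ω => Tr ω = t) with hP
  set e : τ → K → ℝ := fun t k =>
    if P t = 0 then (if k = k₀ then 1 else 0)
    else prEv μ (fun ω => fB (viewB ω) = k ∧ Tr ω = t) / P t with he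
  -- validity of e
  have hval : ∀ t, (∀ k, 0 ≤ e t k) ∧ ∑ k, e t k = 1 := by
    intro t
    by_cases h : P t = 0
    · constructor
      · intro k
        simp only [he, h, if_true]
        split <;> norm_num
      · simp [he, h]
    · constructor
      · intro k
        simp only [he, h, if_false]
        exact div_nonneg (prEv_nonneg μ h0 _)
          (prEv_nonneg μ h0 _)
      · simp only [he, h, if_false]
        rw [← Finset.sum_div]
        rw [sum_pick μ (fun ω => fB (viewB ω)) (fun _ ω => Tr ω = t)]
        exact div_self h
  -- the key computation
  have hzero : ∀ t, P t = 0 → ∀ (E : Ω → Prop),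
      prEv μ (fun ω => E ω ∧ Tr ω = t) = 0 := by
    intro t ht E
    refine le_antisymm ?_ (prEv_nonneg μ h0 _)
    calc prEv μ (fun ω => E ω ∧ Tr ω = t) ≤ prEv μ (fun ω => Tr ω = t) :=
          prEv_mono μ h0 fun ω h => h.2
      _ = 0 := ht
  -- step 2: pointwise identity
  have hstep2 : ∀ t k, e t k * prEv μ (fun ω => fA (viewA ω) = k ∧ Tr ω = t)
      = prEv μ (fun ω => (fA (viewA ω) = k ∧ fB (viewB ω) = k) ∧ Tr ω = t) := by
    intro t k
    by_cases h : P t = 0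
    · rw [hzero t h, hzero t h, mul_zero]
    · simp only [he, h, if_false]
      set Q := prEv μ (fun ω => fA (viewA ω) = k ∧ Tr ω = t) with hQ
      set NB := prEv μ (fun ω => fB (viewB ω) = k ∧ Tr ω = t) with hNB
      set R := prEv μ (fun ω => (fA (viewA ω) = k ∧ fB (viewB ω) = k) ∧ Tr ω = t) with hR
      have key : R * P t = Q * NB := by
        have hQ' : Q = ∑ a, (if fA a = k then
            prEv μ (fun ω => viewA ω = a ∧ Tr ω = t) else 0) :=
          (sum_fiber μ viewA (fun a => fA a = k) (fun ω => Tr ω = t)).symm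
        have hNB' : NB = ∑ b, (if fB b = k then
            prEv μ (fun ω => viewB ω = b ∧ Tr ω = t) else 0) :=
          (sum_fiber μ viewB (fun b => fB b = k) (fun ω => Tr ω = t)).symm
        have hR' : R = ∑ a, (if fA a = k then
            (∑ b, (if fB b = k then
              prEv μ (fun ω => viewA ω = a ∧ viewB ω = b ∧ Tr ω = t) else 0)) else 0) := by
          have e1 : R = prEv μ (fun ω => fA (viewA ω) = k ∧ (fB (viewB ω) = k ∧ Tr ω = t)) :=
            prEv_congr μ fun ω => by tauto
          rw [e1, ← sum_fiber μ viewA (fun a => fA a = k)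
            (fun ω => fB (viewB ω) = k ∧ Tr ω = t)]
          refine (Finset.sum_congr rfl fun a _ => ?_)
          by_cases ha : fA a = k
          · simp only [ha, if_true]
            rw [show (prEv μ fun ω => viewA ω = a ∧ fB (viewB ω) = k ∧ Tr ω = t)
                = prEv μ (fun ω => fB (viewB ω) = k ∧ (viewA ω = a ∧ Tr ω = t))
              from prEv_congr μ fun ω => by tauto]
            rw [← sum_fiber μ viewB (fun b => fB b = k)
              (fun ω => viewA ω = a ∧ Tr ω = t)]
            refine Finset.sum_congr rfl fun b _ => ?_
            by_cases hb : fB b = k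
            · simp only [hb, if_true]
              exact prEv_congr μ fun ω => by tauto
            · simp [hb]
          · simp [ha]
        rw [hR', hQ', hNB', Finset.sum_mul, Finset.sum_mul]
        refine Finset.sum_congr rfl fun a _ => ?_
        by_cases ha : fA a = k
        · simp only [ha, if_true]
          rw [Finset.sum_mul, Finset.mul_sum]
          refine Finset.sum_congr rfl fun b _ => ?_
          by_cases hb : fB b = k
          · simp only [hb, if_true]
            exact hcond t a b
          · simp [hb]
        · simp [ha]
      field_simp
      rw [mul_comm NB Q, ← key]
      ring
  -- step 1: regroup the sum over ω by (transcript, key)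
  have hstep1 : (∑ ω, μ ω * e (Tr ω) (fA (viewA ω)))
      = ∑ t, ∑ k, e t k * prEv μ (fun ω => fA (viewA ω) = k ∧ Tr ω = t) := by
    have hpt : ∀ ω, μ ω * e (Tr ω) (fA (viewA ω))
        = ∑ t, ∑ k, (if fA (viewA ω) = k ∧ Tr ω = t then e t k * μ ω else 0) := by
      intro ω
      rw [Finset.sum_eq_single (Tr ω)]
      · rw [Finset.sum_eq_single (fA (viewA ω))]
        · simp [mul_comm]
        · intro k _ hk
          simp [Ne.symm hk]
        · simp
      · intro t _ ht
        exact Finset.sum_eq_zero fun k _ => by simp [Ne.symm ht]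
      · simp
    simp only [hpt]
    rw [Finset.sum_comm]
    refine Finset.sum_congr rfl fun t _ => ?_
    rw [Finset.sum_comm]
    refine Finset.sum_congr rfl fun k _ => ?_
    unfold prEv
    rw [Finset.mul_sum]
    refine Finset.sum_congr rfl fun ω _ => ?_
    split <;> simp [mul_comm]
  -- combine
  have hmain : (∑ ω, μ ω * e (Tr ω) (fA (viewA ω)))
      = prEv μ (fun ω => fA (viewA ω) = fB (viewB ω)) := by
    rw [hstep1]
    have : ∀ t k, e t k * prEv μ (fun ω => fA (viewA ω) = k ∧ Tr ω = t)
        = prEv μ (fun ω => (fA (viewA ω) = k ∧ fB (viewB ω) = k) ∧ Tr ω = t) := hstep2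
    simp only [this]
    rw [Finset.sum_comm]
    have hsumt : ∀ k, ∑ t, prEv μ (fun ω => (fA (viewA ω) = k ∧ fB (viewB ω) = k) ∧ Tr ω = t)
        = prEv μ (fun ω => fA (viewA ω) = k ∧ fB (viewB ω) = k) := by
      intro k
      rw [show (fun t => prEv μ (fun ω => (fA (viewA ω) = k ∧ fB (viewB ω) = k) ∧ Tr ω = t))
          = fun t => prEv μ (fun ω => Tr ω = t ∧ (fA (viewA ω) = k ∧ fB (viewB ω) = k))
        from funext fun t => prEv_congr μ fun ω => by tauto]
      exact sum_pick μ Tr (fun _ ω => fA (viewA ω) = k ∧ fB (viewB ω) = k)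
    simp only [hsumt]
    rw [show (fun k => prEv μ (fun ω => fA (viewA ω) = k ∧ fB (viewB ω) = k))
        = fun k => prEv μ (fun ω => fA (viewA ω) = k ∧ fB (viewB ω) = k)
      from rfl]
    have := sum_pick μ (fun ω => fA (viewA ω)) (fun k ω => fB (viewB ω) = k)
    rw [this]
    exact prEv_congr μ fun ω => by constructor <;> exact Eq.symm
  refine ⟨⟨e, hval, hmain⟩, ?_⟩
  intro α γ hα0 hα1 hγ0 hγα ⟨hacc, hsec⟩
  have := hsec e hval
  rw [hmain] at this
  linarith
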